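/- (Beilinson's Lemma) Let F : T → T' be a triangulated functor between triangulated categories and M a set of objects of T. If for all X, Y ∈ M and all integers i the map F : Hom_T(X, Y[i]) → Hom_{T'}(F(X), F(Y)[i]) is an isomorphism, then F restricts to a triangulated equivalence tria(M) → tria(F(M)), where tria(M) denotes the smallest strict full triangulated subcategory containing M. -/

import Mathlib

set_option linter.unusedSectionVars false


/-!
STATEMENT 2 (Beilinson's Lemma): Let `F : T ⥤ T'` be a triangulated functor
between triangulated categories and `M` a set of objects of `T`.  If for all
`X, Y ∈ M` and all `i : ℤ` the map `F : Hom(X, Y⟦i⟧) → Hom(F X, (F Y)⟦i⟧)` is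
bijective, then `F` restricts to an equivalence (of triangulated categories)
`tria(M) ⥤ tria(F(M))`, where `tria(M)` is the smallest strictly full
triangulated subcategory containing `M`.
-/

open CategoryTheory Limits Pretriangulated

/-- The smallest strictly full triangulated subcategory containing a set of
objects: closure under isomorphisms, shifts (by arbitrary integers) and cones
of distinguished triangles. -/
inductive TriaClosure {T : Type*} [Category T] [HasZeroObject T] [HasShift T ℤ]
    [Preadditive T] [∀ n : ℤ, (shiftFunctor T n).Additive] [Pretriangulated T]
    (M : Set T) : T → Prop
  | of (X : T) (hX : X ∈ M) : TriaClosure M X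
  | isoClosed (X Y : T) (e : X ≅ Y) (hX : TriaClosure M X) : TriaClosure M Y
  | shift (X : T) (n : ℤ) (hX : TriaClosure M X) : TriaClosure M (X⟦n⟧)
  | cone (Tr : Triangle T) (hTr : Tr ∈ distTriang T)
      (h₁ : TriaClosure M Tr.obj₁) (h₂ : TriaClosure M Tr.obj₂) :
      TriaClosure M Tr.obj₃

section Aux
variable {T T' : Type*} [Category T] [Category T']
    [HasZeroObject T] [HasShift T ℤ] [Preadditive T]
    [∀ n : ℤ, (shiftFunctor T n).Additive] [Pretriangulated T]
    [HasZeroObject T'] [HasShift T' ℤ] [Preadditive T']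
    [∀ n : ℤ, (shiftFunctor T' n).Additive] [Pretriangulated T']
    (F : T ⥤ T') [F.CommShift ℤ] [F.IsTriangulated]

/-- bijectivity of `F` on a hom set -/
def BBP (X Y : T) : Prop := Function.Bijective (fun f : X ⟶ Y => F.map f)

lemma BBP_congr {X X' Y Y' : T} (e : X ≅ X') (e' : Y ≅ Y') (hp : BBP F X Y) : BBP F X' Y' := by
  have key : (fun f : X' ⟶ Y' => F.map f) =
      ((F.mapIso e).homCongr (F.mapIso e')) ∘ (fun f : X ⟶ Y => F.map f) ∘ ⇑(e.homCongr e').symm := by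
    funext f
    simp [Iso.homCongr]
  rw [BBP, key]
  exact (Equiv.bijective _).comp (hp.comp (Equiv.bijective _))

lemma BBP_shift {X Y : T} (n : ℤ) (hp : BBP F X Y) : BBP F (X⟦n⟧) (Y⟦n⟧) := by
  have hsh : Function.Bijective (fun g : X ⟶ Y => (shiftFunctor T n).map g) :=
    ⟨fun _ _ hh => (shiftFunctor T n).map_injective hh,
     fun g => ⟨(shiftFunctor T n).preimage g, (shiftFunctor T n).map_preimage g⟩⟩
  have key : (fun f : X⟦n⟧ ⟶ Y⟦n⟧ => F.map f) ∘ (fun g : X ⟶ Y => (shiftFunctor T n).map g)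
      = ⇑((((F.commShiftIso n).app X).symm.homCongr ((F.commShiftIso n).app Y).symm)) ∘
        (fun g : F.obj X ⟶ F.obj Y => (shiftFunctor T' n).map g) ∘ (fun f : X ⟶ Y => F.map f) := by
    funext g
    have := (F.commShiftIso n).hom.naturality g
    dsimp at this ⊢
    simp [Iso.homCongr, ← this]
  rw [BBP, ← Function.Bijective.of_comp_iff _ hsh, key]
  have hsh' : Function.Bijective (fun g : F.obj X ⟶ F.obj Y => (shiftFunctor T' n).map g) :=
    ⟨fun _ _ hh => (shiftFunctor T' n).map_injective hh,
     fun g => ⟨(shiftFunctor T' n).preimage g, (shiftFunctor T' n).map_preimage g⟩⟩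
  exact (Equiv.bijective _).comp (hsh'.comp hp)

lemma BBP_cone_right {X : T} (Tr : Triangle T) (hTr : Tr ∈ distTriang T)
    (h₁ : BBP F X Tr.obj₁) (h₂ : BBP F X Tr.obj₂)
    (h₁' : BBP F X (Tr.obj₁⟦(1:ℤ)⟧)) (h₂' : BBP F X (Tr.obj₂⟦(1:ℤ)⟧)) :
    BBP F X Tr.obj₃ := by
  have hFTr : F.mapTriangle.obj Tr ∈ distTriang T' := F.map_distinguished Tr hTr
  constructor
  · -- injectivity
    intro c c' hcc
    have hsub : F.map (c - c') = 0 := by simp [hcc]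
    set d := c - c' with hd
    suffices hdz : d = 0 by
      have := sub_eq_zero.1 hdz; exact this
    -- d ≫ Tr.mor₃ = 0
    have hz1 : d ≫ Tr.mor₃ = 0 := by
      apply h₁'.1
      simp [hsub]
    obtain ⟨b, hb⟩ := Triangle.coyoneda_exact₃ Tr hTr d hz1
    have hz2 : F.map b ≫ (F.mapTriangle.obj Tr).mor₂ = 0 := by
      change F.map b ≫ F.map Tr.mor₂ = 0
      rw [← F.map_comp, ← hb, hsub]
    obtain ⟨α, hα⟩ := Triangle.coyoneda_exact₂ _ hFTr (F.map b) hz2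
    obtain ⟨a, rfl⟩ := h₁.2 α
    have hba : b = a ≫ Tr.mor₁ := by
      apply h₂.1
      show F.map b = F.map (a ≫ Tr.mor₁)
      rw [F.map_comp]; exact hα
    rw [hb, hba, Category.assoc, comp_distTriang_mor_zero₁₂ Tr hTr, comp_zero]
  · -- surjectivity
    intro φ
    obtain ⟨ψ, hψ⟩ := h₁'.2 (φ ≫ F.map Tr.mor₃)
    beta_reduce at hψ
    have hz : ψ ≫ Tr.mor₁⟦(1:ℤ)⟧' = 0 := by
      apply h₂'.1
      beta_reduce
      rw [F.map_comp, hψ, Category.assoc, ← F.map_comp,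
        comp_distTriang_mor_zero₃₁ Tr hTr]
      simp
    obtain ⟨χ, hχ⟩ := Triangle.coyoneda_exact₁ Tr hTr ψ hz
    have hz2 : (φ - F.map χ) ≫ (F.mapTriangle.obj Tr).mor₃ = 0 := by
      change (φ - F.map χ) ≫ (F.map Tr.mor₃ ≫ (F.commShiftIso (1:ℤ)).hom.app Tr.obj₁) = 0
      rw [Preadditive.sub_comp, ← Category.assoc, ← Category.assoc, ← F.map_comp, ← hχ, hψ, sub_self]
    obtain ⟨β, hβ⟩ := Triangle.coyoneda_exact₃ _ hFTr (φ - F.map χ) hz2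
    obtain ⟨b, rfl⟩ := h₂.2 β
    beta_reduce at hβ
    refine ⟨χ + b ≫ Tr.mor₂, ?_⟩
    have : (F.mapTriangle.obj Tr).mor₂ = F.map Tr.mor₂ := rfl
    rw [this] at hβ
    show F.map _ = _
    rw [F.map_add, F.map_comp, show F.map b ≫ F.map Tr.mor₂ = φ - F.map χ from hβ.symm]
    abel

lemma BBP_cone_left {Y : T} (Tr : Triangle T) (hTr : Tr ∈ distTriang T)
    (h₁ : BBP F Tr.obj₁ Y) (h₂ : BBP F Tr.obj₂ Y)
    (h₁' : BBP F (Tr.obj₁⟦(1:ℤ)⟧) Y) (h₂' : BBP F (Tr.obj₂⟦(1:ℤ)⟧) Y) :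
    BBP F Tr.obj₃ Y := by
  have hFTr : F.mapTriangle.obj Tr ∈ distTriang T' := F.map_distinguished Tr hTr
  constructor
  · intro c c' hcc
    have hsub : F.map (c - c') = 0 := by simp [hcc]
    set d := c - c' with hd
    suffices hdz : d = 0 by exact sub_eq_zero.1 hdz
    have hz1 : Tr.mor₂ ≫ d = 0 := by
      apply h₂.1
      simp [hsub]
    obtain ⟨g, hg⟩ := Triangle.yoneda_exact₃ Tr hTr d hz1
    have hz2 : (F.mapTriangle.obj Tr).mor₃ ≫
        ((F.commShiftIso (1:ℤ)).inv.app Tr.obj₁ ≫ F.map g) = 0 := by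
      change (F.map Tr.mor₃ ≫ (F.commShiftIso (1:ℤ)).hom.app Tr.obj₁) ≫
        ((F.commShiftIso (1:ℤ)).inv.app Tr.obj₁ ≫ F.map g) = 0
      rw [Category.assoc, Iso.hom_inv_id_app_assoc, ← F.map_comp, ← hg, hsub]
    obtain ⟨v, hv⟩ := Triangle.yoneda_exact₃ _ (rot_of_distTriang _ hFTr)
      ((F.commShiftIso (1:ℤ)).inv.app Tr.obj₁ ≫ F.map g) hz2
    obtain ⟨b', hb'⟩ := h₂'.2 ((F.commShiftIso (1:ℤ)).hom.app Tr.obj₂ ≫ v)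
    beta_reduce at hb'
    have hgval : g = -(Tr.mor₁⟦(1:ℤ)⟧' ≫ b') := by
      apply h₁'.1
      beta_reduce
      have hnat := (F.commShiftIso (1:ℤ)).hom.naturality Tr.mor₁
      dsimp at hnat hv
      rw [F.map_neg, F.map_comp, hb']
      have : F.map g = (F.commShiftIso (1:ℤ)).hom.app Tr.obj₁ ≫
          ((F.commShiftIso (1:ℤ)).inv.app Tr.obj₁ ≫ F.map g) := by
        simp
      rw [this, show ((F.commShiftIso (1:ℤ)).inv.app Tr.obj₁ ≫ F.map g) = _ from hv]
      obtain ⟨v', rfl⟩ : ∃ v' : (shiftFunctor T' 1).obj (F.obj Tr.obj₂) ⟶ F.obj Y, v' = v :=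
        ⟨v, rfl⟩
      have key : (F.commShiftIso (1:ℤ)).hom.app Tr.obj₁ ≫ (-(F.map Tr.mor₁)⟦(1:ℤ)⟧') ≫ v' =
          -(F.map (Tr.mor₁⟦(1:ℤ)⟧') ≫ (F.commShiftIso (1:ℤ)).hom.app Tr.obj₂ ≫ v') := by
        simp only [Preadditive.neg_comp, Preadditive.comp_neg, ← Category.assoc, hnat]
      exact key
    rw [hg, hgval, Preadditive.comp_neg, ← Category.assoc,
      comp_distTriang_mor_zero₃₁ Tr hTr, zero_comp, neg_zero]
  · intro φ
    obtain ⟨b, hb⟩ := h₂.2 (F.map Tr.mor₂ ≫ φ)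
    beta_reduce at hb
    have hz : Tr.mor₁ ≫ b = 0 := by
      apply h₁.1
      beta_reduce
      rw [F.map_comp, hb, ← Category.assoc, ← F.map_comp,
        comp_distTriang_mor_zero₁₂ Tr hTr]
      simp
    obtain ⟨χ, hχ⟩ := Triangle.yoneda_exact₂ Tr hTr b hz
    have hz2 : (F.mapTriangle.obj Tr).mor₂ ≫ (φ - F.map χ) = 0 := by
      have : (F.mapTriangle.obj Tr).mor₂ = F.map Tr.mor₂ := rfl
      change F.map Tr.mor₂ ≫ (φ - F.map χ) = 0
      rw [Preadditive.comp_sub, ← hb, ← F.map_comp, ← hχ, sub_self]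
    obtain ⟨γ, hγ⟩ := Triangle.yoneda_exact₃ _ hFTr (φ - F.map χ) hz2
    obtain ⟨a', ha'⟩ := h₁'.2 ((F.commShiftIso (1:ℤ)).hom.app Tr.obj₁ ≫ γ)
    beta_reduce at ha'
    refine ⟨χ + Tr.mor₃ ≫ a', ?_⟩
    show F.map _ = _
    have : (F.mapTriangle.obj Tr).mor₃ =
        F.map Tr.mor₃ ≫ (F.commShiftIso (1:ℤ)).hom.app Tr.obj₁ := rfl
    rw [this] at hγ
    rw [F.map_add, F.map_comp, ha']
    have e : F.map Tr.mor₃ ≫ (F.commShiftIso (1:ℤ)).hom.app Tr.obj₁ ≫ γ = φ - F.map χ :=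
      (Category.assoc _ _ _).symm.trans hγ.symm
    exact (congrArg (F.map χ + ·) e).trans (add_sub_cancel _ _)


lemma BBP_all (M : Set T)
    (h : ∀ X ∈ M, ∀ Y ∈ M, ∀ i : ℤ,
      Function.Bijective (fun f : X ⟶ Y⟦i⟧ =>
        F.map f ≫ (F.commShiftIso i).hom.app Y))
    {X Y : T} (hX : TriaClosure M X) (hY : TriaClosure M Y) : BBP F X Y := by
  have base : ∀ X ∈ M, ∀ Y ∈ M, ∀ i : ℤ, BBP F X (Y⟦i⟧) := by
    intro X hX Y hY i
    have hb := h X hX Y hY i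
    have heq : (fun f : X ⟶ Y⟦i⟧ => F.map f ≫ (F.commShiftIso i).hom.app Y) =
        (fun g : F.obj X ⟶ F.obj (Y⟦i⟧) => g ≫ (F.commShiftIso i).hom.app Y) ∘
          (fun f : X ⟶ Y⟦i⟧ => F.map f) := rfl
    rw [heq] at hb
    have hpost : Function.Bijective
        (fun g : F.obj X ⟶ F.obj (Y⟦i⟧) => g ≫ (F.commShiftIso i).hom.app Y) := by
      have : (fun g : F.obj X ⟶ F.obj (Y⟦i⟧) => g ≫ (F.commShiftIso i).hom.app Y)
          = ⇑((Iso.refl (F.obj X)).homCongr ((F.commShiftIso i).app Y)) := by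
        funext g; simp [Iso.homCongr]
      rw [this]
      exact Equiv.bijective _
    exact (Function.Bijective.of_comp_iff' hpost _).1 hb
  have main : ∀ {A : T}, TriaClosure M A → ∀ (n : ℤ) {B : T}, TriaClosure M B → ∀ (m : ℤ),
      BBP F (A⟦n⟧) (B⟦m⟧) := by
    intro A hA
    induction hA with
    | of A hAM =>
      intro n B hB
      induction hB with
      | of B hBM =>
        intro m
        exact BBP_congr F (Iso.refl _) ((shiftFunctorAdd' T (m - n) n m (by ring)).app B).symm
          (BBP_shift F n (base A hAM B hBM (m - n)))
      | isoClosed B B' e hB IH =>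
        intro m
        exact BBP_congr F (Iso.refl _) ((shiftFunctor T m).mapIso e) (IH m)
      | shift B k hB IH =>
        intro m
        exact BBP_congr F (Iso.refl _) ((shiftFunctorAdd' T k m (k + m) rfl).app B) (IH (k + m))
      | cone Tr hTr h1 h2 IH1 IH2 =>
        intro m
        exact BBP_cone_right F _ (Triangle.shift_distinguished Tr hTr m)
          (IH1 m) (IH2 m)
          (BBP_congr F (Iso.refl _) ((shiftFunctorAdd' T m 1 (m + 1) rfl).app Tr.obj₁)
            (IH1 (m + 1)))
          (BBP_congr F (Iso.refl _) ((shiftFunctorAdd' T m 1 (m + 1) rfl).app Tr.obj₂)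
            (IH2 (m + 1)))
    | isoClosed A A' e hA IH =>
      intro n B hB m
      exact BBP_congr F ((shiftFunctor T n).mapIso e) (Iso.refl _) (IH n hB m)
    | shift A k hA IH =>
      intro n B hB m
      exact BBP_congr F ((shiftFunctorAdd' T k n (k + n) rfl).app A) (Iso.refl _) (IH (k + n) hB m)
    | cone Tr hTr h1 h2 IH1 IH2 =>
      intro n B hB m
      exact BBP_cone_left F _ (Triangle.shift_distinguished Tr hTr n)
        (IH1 n hB m) (IH2 n hB m)
        (BBP_congr F ((shiftFunctorAdd' T n 1 (n + 1) rfl).app Tr.obj₁) (Iso.refl _)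
          (IH1 (n + 1) hB m))
        (BBP_congr F ((shiftFunctorAdd' T n 1 (n + 1) rfl).app Tr.obj₂) (Iso.refl _)
          (IH2 (n + 1) hB m))
  exact BBP_congr F ((shiftFunctorZero T ℤ).app X) ((shiftFunctorZero T ℤ).app Y)
    (main hX 0 hY 0)

lemma TriaClosure_map {X : T} (M : Set T) (hX : TriaClosure M X) :
    TriaClosure (F.obj '' M) (F.obj X) := by
  induction hX with
  | of X hXM => exact TriaClosure.of _ ⟨X, hXM, rfl⟩
  | isoClosed X Y e _ IH => exact TriaClosure.isoClosed _ _ (F.mapIso e) IH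
  | shift X n _ IH =>
    exact TriaClosure.isoClosed _ _ ((F.commShiftIso n).app X).symm
      (TriaClosure.shift _ n IH)
  | cone Tr hTr _ _ IH1 IH2 =>
    exact TriaClosure.cone (F.mapTriangle.obj Tr) (F.map_distinguished Tr hTr) IH1 IH2

lemma essSurj_aux (M : Set T)
    (h : ∀ X ∈ M, ∀ Y ∈ M, ∀ i : ℤ,
      Function.Bijective (fun f : X ⟶ Y⟦i⟧ =>
        F.map f ≫ (F.commShiftIso i).hom.app Y))
    {Z : T'} (hZ : TriaClosure (F.obj '' M) Z) :
    ∃ X : T, TriaClosure M X ∧ Nonempty (F.obj X ≅ Z) := by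
  induction hZ with
  | of Z hZM =>
    obtain ⟨X, hXM, rfl⟩ := hZM
    exact ⟨X, TriaClosure.of X hXM, ⟨Iso.refl _⟩⟩
  | isoClosed Z Z' e _ IH =>
    obtain ⟨X, hX, ⟨e'⟩⟩ := IH
    exact ⟨X, hX, ⟨e' ≪≫ e⟩⟩
  | shift Z n _ IH =>
    obtain ⟨X, hX, ⟨e'⟩⟩ := IH
    exact ⟨X⟦n⟧, TriaClosure.shift X n hX,
      ⟨(F.commShiftIso n).app X ≪≫ (shiftFunctor T' n).mapIso e'⟩⟩
  | cone Tr hTr h1 h2 IH1 IH2 =>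
    obtain ⟨X₁, hX₁, ⟨e₁⟩⟩ := IH1
    obtain ⟨X₂, hX₂, ⟨e₂⟩⟩ := IH2
    obtain ⟨φ, hφ⟩ := (BBP_all F M h hX₁ hX₂).2 (e₁.hom ≫ Tr.mor₁ ≫ e₂.inv)
    beta_reduce at hφ
    obtain ⟨X₃, g, k, hT3⟩ := distinguished_cocone_triangle φ
    refine ⟨X₃, TriaClosure.cone _ hT3 hX₁ hX₂, ?_⟩
    have hmap : F.mapTriangle.obj (Triangle.mk φ g k) ∈ distTriang T' :=
      F.map_distinguished _ hT3
    have comm : (F.mapTriangle.obj (Triangle.mk φ g k)).mor₁ ≫ e₂.hom = e₁.hom ≫ Tr.mor₁ := by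
      have : (F.mapTriangle.obj (Triangle.mk φ g k)).mor₁ = F.map φ := rfl
      rw [this, hφ]
      exact (by simp : (e₁.hom ≫ Tr.mor₁ ≫ e₂.inv) ≫ e₂.hom = e₁.hom ≫ Tr.mor₁)
    exact ⟨Triangle.π₃.mapIso
      (isoTriangleOfIso₁₂ _ _ hmap hTr e₁ e₂ comm)⟩

end Aux

set_option linter.unusedSectionVars false in
theorem statement2 {T T' : Type*} [Category T] [Category T']
    [HasZeroObject T] [HasShift T ℤ] [Preadditive T]
    [∀ n : ℤ, (shiftFunctor T n).Additive] [Pretriangulated T]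
    [HasZeroObject T'] [HasShift T' ℤ] [Preadditive T']
    [∀ n : ℤ, (shiftFunctor T' n).Additive] [Pretriangulated T']
    (F : T ⥤ T') [F.CommShift ℤ] [F.IsTriangulated]
    (M : Set T)
    (h : ∀ X ∈ M, ∀ Y ∈ M, ∀ i : ℤ,
      Function.Bijective (fun f : X ⟶ Y⟦i⟧ =>
        F.map f ≫ (F.commShiftIso i).hom.app Y)) :
    -- `F` maps `tria(M)` into `tria(F(M))` and the induced functor
    -- `tria(M) ⥤ tria(F(M))` is an equivalence (of triangulated categories).
    ∃ hmap : ∀ X : T, TriaClosure M X → TriaClosure (F.obj '' M) (F.obj X),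
      (ObjectProperty.lift (TriaClosure (F.obj '' M))
        (ObjectProperty.ι (TriaClosure M) ⋙ F)
        (fun X => hmap X.1 X.2)).IsEquivalence := by

  refine ⟨fun X hX => TriaClosure_map F M hX, ?_⟩
  set G := ObjectProperty.lift (TriaClosure (F.obj '' M))
    (ObjectProperty.ι (TriaClosure M) ⋙ F)
    (fun X => TriaClosure_map F M X.2) with hG
  have hfaithful : G.Faithful := by
    constructor
    intro X Y f g hfg
    exact ObjectProperty.hom_ext _ ((BBP_all F M h X.2 Y.2).1 (congrArg (fun u => u.hom) hfg))
  have hfull : G.Full := by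
    constructor
    intro X Y f
    obtain ⟨f', hf'⟩ := (BBP_all F M h X.2 Y.2).2 f.hom
    exact ⟨ObjectProperty.homMk f', ObjectProperty.hom_ext _ hf'⟩
  have hess : G.EssSurj := by
    constructor
    intro Z
    obtain ⟨X, hX, ⟨e⟩⟩ := essSurj_aux F M h Z.2
    exact ⟨⟨X, hX⟩, ⟨(ObjectProperty.ι (TriaClosure (F.obj '' M))).preimageIso e⟩⟩
  exact { faithful := hfaithful, full := hfull, essSurj := hess }
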